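/- Let V be a real random variable whose distribution has a density f with respect to Lebesgue measure, supported on [0,1], with C̲ ≤ f(u) ≤ C̄ for all u ∈ [0,1], where 0 < C̲ < C̄ (necessarily C̲ ≤ 1 ≤ C̄ since f integrates to 1). Then (1/3)·(C̲ + (1−C̲)³/(C̄−C̲)²) ≤ E[V²] ≤ (1/3)·(C̄ − (C̄−1)³/(C̄−C̲)²); in particular C̲/3 ≤ E[V²] ≤ C̄/3. -/

import Mathlib

open MeasureTheory ProbabilityTheory
open scoped ENNReal NNReal

/-- If a real random variable `V` has a density `f` (w.r.t. Lebesgue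
measure) supported on `[0,1]` with `Clo ≤ f ≤ Chi` there, `0 < Clo < Chi`, then
`(1/3)(Clo + (1−Clo)³/(Chi−Clo)²) ≤ E[V²] ≤ (1/3)(Chi − (Chi−1)³/(Chi−Clo)²)`;
in particular `Clo/3 ≤ E[V²] ≤ Chi/3`. -/
theorem second_moment_density_bounds
    {Ω : Type*} [MeasurableSpace Ω] (P : Measure Ω) [IsProbabilityMeasure P]
    (V : Ω → ℝ) (hVmeas : Measurable V)
    (Clo Chi : ℝ) (hClo : 0 < Clo) (hCloChi : Clo < Chi)
    (f : ℝ → ℝ) (hfmeas : Measurable f)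
    (hlaw : Measure.map V P = volume.withDensity (fun u => ENNReal.ofReal (f u)))
    (hfsupp : ∀ u : ℝ, u ∉ Set.Icc (0 : ℝ) 1 → f u = 0)
    (hfbound : ∀ u ∈ Set.Icc (0 : ℝ) 1, Clo ≤ f u ∧ f u ≤ Chi) :
    ((1 / 3) * (Clo + (1 - Clo) ^ 3 / (Chi - Clo) ^ 2) ≤ ∫ ω, (V ω) ^ 2 ∂P
        ∧ ∫ ω, (V ω) ^ 2 ∂P ≤ (1 / 3) * (Chi - (Chi - 1) ^ 3 / (Chi - Clo) ^ 2))
      ∧ (Clo / 3 ≤ ∫ ω, (V ω) ^ 2 ∂P ∧ ∫ ω, (V ω) ^ 2 ∂P ≤ Chi / 3) := by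
  have hChi0 : 0 < Chi := hClo.trans hCloChi
  have hCC : (0:ℝ) < Chi - Clo := sub_pos.2 hCloChi
  have hf0 : ∀ u, 0 ≤ f u := by
    intro u
    by_cases hu : u ∈ Set.Icc (0:ℝ) 1
    · exact hClo.le.trans (hfbound u hu).1
    · exact (hfsupp u hu).ge
  have hfC : ∀ u, f u ≤ Chi := by
    intro u
    by_cases hu : u ∈ Set.Icc (0:ℝ) 1
    · exact (hfbound u hu).2
    · rw [hfsupp u hu]; exact hChi0.le
  -- integrability of f
  have hfint : Integrable f := by
    have hfind : f = Set.indicator (Set.Icc (0:ℝ) 1) f := by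
      funext u
      by_cases hu : u ∈ Set.Icc (0:ℝ) 1
      · rw [Set.indicator_of_mem hu]
      · rw [Set.indicator_of_notMem hu, hfsupp u hu]
    rw [hfind, integrable_indicator_iff measurableSet_Icc]
    refine Integrable.mono' (g := fun _ => Chi)
      (integrableOn_const (by simp)) hfmeas.aestronglyMeasurable.restrict ?_
    exact ae_of_all _ fun u => by
      rw [Real.norm_eq_abs, abs_of_nonneg (hf0 u)]; exact hfC u
  -- total mass one
  have hintf : ∫ u, f u = 1 := by
    have hmap : Measure.map V P Set.univ = 1 := by
      rw [Measure.map_apply hVmeas MeasurableSet.univ]; simp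
    rw [hlaw, withDensity_apply _ MeasurableSet.univ, Measure.restrict_univ] at hmap
    have h2 := ofReal_integral_eq_lintegral_ofReal hfint (ae_of_all _ hf0)
    rw [hmap] at h2
    exact ENNReal.ofReal_eq_one.mp h2
  have hintf' : ∫ u in Set.Ioc (0:ℝ) 1, f u = 1 := by
    rw [← integral_Icc_eq_integral_Ioc,
      setIntegral_eq_integral_of_forall_compl_eq_zero (fun u hu => hfsupp u hu), hintf]
  -- second moment as an integral against the density
  have hEV : ∫ ω, (V ω)^2 ∂P = ∫ x in Set.Ioc (0:ℝ) 1, f x * x^2 := by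
    have h1 : ∫ ω, (V ω)^2 ∂P = ∫ x, x^2 ∂(Measure.map V P) :=
      (integral_map hVmeas.aemeasurable (continuous_pow 2).aestronglyMeasurable).symm
    rw [h1, hlaw]
    have h2 : (fun u => ENNReal.ofReal (f u)) = fun u => ((f u).toNNReal : ℝ≥0∞) := rfl
    rw [h2, integral_withDensity_eq_integral_smul hfmeas.real_toNNReal]
    have h3 : (fun x => (f x).toNNReal • x^2) = fun x => f x * x^2 := by
      funext x
      rw [NNReal.smul_def, Real.coe_toNNReal _ (hf0 x), smul_eq_mul]
    rw [h3, ← setIntegral_eq_integral_of_forall_compl_eq_zero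
        (s := Set.Icc (0:ℝ) 1) (fun u hu => by rw [hfsupp u hu, zero_mul]),
      integral_Icc_eq_integral_Ioc]
  -- integrability helpers
  have hIntF : ∀ (a b c : ℝ), IntegrableOn (fun x => f x * (x^2 - c)) (Set.Ioc a b) := by
    intro a b c
    refine Integrable.bdd_mul (c := Chi) ?_ hfmeas.aestronglyMeasurable.restrict (ae_of_all _ fun x => ?_)
    · exact ((continuous_pow 2).sub continuous_const).integrableOn_Ioc
    · rw [Real.norm_eq_abs, abs_of_nonneg (hf0 x)]; exact hfC x
  have hIntC : ∀ (a b c d : ℝ), IntegrableOn (fun x => d * (x^2 - c)) (Set.Ioc a b) :=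
    fun a b c d => (continuous_const.mul ((continuous_pow 2).sub continuous_const)).integrableOn_Ioc
  -- Clo ≤ 1 ≤ Chi
  have hClo1 : Clo ≤ 1 := by
    have h := setIntegral_mono_on (f := fun _ => Clo)
      (integrableOn_const (by simp)) hfint.integrableOn
      measurableSet_Ioc (fun x hx => (hfbound x ⟨hx.1.le, hx.2⟩).1)
    simpa [hintf'] using h
  have hChi1 : 1 ≤ Chi := by
    have h := setIntegral_mono_on (g := fun _ => Chi)
      hfint.integrableOn (integrableOn_const (by simp))
      measurableSet_Ioc (fun x hx => (hfbound x ⟨hx.1.le, hx.2⟩).2)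
    simpa [hintf'] using h
  -- value of elementary integrals
  have hIval : ∀ (a b c : ℝ), a ≤ b → ∫ x in Set.Ioc a b, (x^2 - c^2) =
      (b^3 - a^3)/3 - (b - a) * c^2 := by
    intro a b c hab
    rw [← intervalIntegral.integral_of_le hab,
        intervalIntegral.integral_sub (intervalIntegral.intervalIntegrable_pow 2)
          intervalIntegrable_const,
        integral_pow, intervalIntegral.integral_const]
    push_cast
    simp [smul_eq_mul]
    ring
  -- splitting of the domain
  have hsplit : ∀ (c : ℝ), 0 ≤ c → c ≤ 1 →
      ∫ x in Set.Ioc (0:ℝ) 1, f x * (x^2 - c^2)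
        = (∫ x in Set.Ioc (0:ℝ) c, f x * (x^2 - c^2))
          + ∫ x in Set.Ioc c 1, f x * (x^2 - c^2) := by
    intro c h0 h1
    rw [← Set.Ioc_union_Ioc_eq_Ioc h0 h1,
        setIntegral_union (Set.Ioc_disjoint_Ioc_of_le le_rfl) measurableSet_Ioc
          (hIntF 0 c _) (hIntF c 1 _)]
  -- decomposition of the second moment
  have hdec : ∀ (c : ℝ), ∫ x in Set.Ioc (0:ℝ) 1, f x * x^2
      = (∫ x in Set.Ioc (0:ℝ) 1, f x * (x^2 - c^2)) + c^2 := by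
    intro c
    have e0 : (fun x => f x * x^2) = fun x => f x * (x^2 - c^2) + c^2 * f x := by
      funext x; ring
    calc ∫ x in Set.Ioc (0:ℝ) 1, f x * x^2
        = ∫ x in Set.Ioc (0:ℝ) 1, (f x * (x^2 - c^2) + c^2 * f x) := by rw [e0]
      _ = (∫ x in Set.Ioc (0:ℝ) 1, f x * (x^2 - c^2))
            + ∫ x in Set.Ioc (0:ℝ) 1, c^2 * f x :=
        integral_add (hIntF 0 1 _) (hfint.integrableOn.const_mul _)
      _ = (∫ x in Set.Ioc (0:ℝ) 1, f x * (x^2 - c^2)) + c^2 := by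
        rw [integral_const_mul, hintf', mul_one]
  set t : ℝ := (1 - Clo)/(Chi - Clo) with ht_def
  set s : ℝ := (Chi - 1)/(Chi - Clo) with hs_def
  have ht0 : 0 ≤ t := div_nonneg (by linarith) hCC.le
  have ht1 : t ≤ 1 := by rw [div_le_one hCC]; linarith
  have hs0 : 0 ≤ s := div_nonneg (by linarith) hCC.le
  have hs1 : s ≤ 1 := by rw [div_le_one hCC]; linarith
  have htt : (Chi - Clo) * t = 1 - Clo := by
    rw [ht_def]; field_simp
  have hss : (Chi - Clo) * s = Chi - 1 := by
    rw [hs_def]; field_simp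
  -- lower bound
  have hlow : (1 / 3) * (Clo + (1 - Clo) ^ 3 / (Chi - Clo) ^ 2)
      ≤ ∫ x in Set.Ioc (0:ℝ) 1, f x * x^2 := by
    have h1 : ∫ x in Set.Ioc (0:ℝ) t, Chi * (x^2 - t^2)
        ≤ ∫ x in Set.Ioc (0:ℝ) t, f x * (x^2 - t^2) := by
      refine setIntegral_mono_on (hIntC 0 t _ _) (hIntF 0 t _) measurableSet_Ioc ?_
      intro x hx
      have hneg : x^2 - t^2 ≤ 0 := by nlinarith [hx.1.le, hx.2]
      exact mul_le_mul_of_nonpos_right (hfbound x ⟨hx.1.le, hx.2.trans ht1⟩).2 hneg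
    have h2 : ∫ x in Set.Ioc t 1, Clo * (x^2 - t^2)
        ≤ ∫ x in Set.Ioc t 1, f x * (x^2 - t^2) := by
      refine setIntegral_mono_on (hIntC t 1 _ _) (hIntF t 1 _) measurableSet_Ioc ?_
      intro x hx
      have hpos : 0 ≤ x^2 - t^2 := by nlinarith [hx.1.le, hx.2]
      exact mul_le_mul_of_nonneg_right (hfbound x ⟨ht0.trans hx.1.le, hx.2⟩).1 hpos
    have e1 : ∫ x in Set.Ioc (0:ℝ) t, Chi * (x^2 - t^2)
        = Chi * ((t^3 - 0^3)/3 - (t - 0) * t^2) := by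
      rw [integral_const_mul, hIval 0 t t ht0]
    have e2 : ∫ x in Set.Ioc t 1, Clo * (x^2 - t^2)
        = Clo * ((1^3 - t^3)/3 - (1 - t) * t^2) := by
      rw [integral_const_mul, hIval t 1 t ht1]
    have halg : (1 / 3) * (Clo + (1 - Clo) ^ 3 / (Chi - Clo) ^ 2)
        = Chi * ((t^3 - 0^3)/3 - (t - 0) * t^2)
          + Clo * ((1^3 - t^3)/3 - (1 - t) * t^2) + t^2 := by
      have h3 : (1 - Clo)^3 = ((Chi - Clo) * t)^3 := by rw [htt]
      have h4 : ((Chi - Clo) * t)^3 / (Chi - Clo)^2 = (Chi - Clo) * t^3 := by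
        field_simp [hCC.ne']
      rw [h3, h4]
      linear_combination t^2 * htt
    rw [hdec t, hsplit t ht0 ht1, halg]
    linarith [h1, h2, e1, e2]
  -- upper bound
  have hupp : ∫ x in Set.Ioc (0:ℝ) 1, f x * x^2
      ≤ (1 / 3) * (Chi - (Chi - 1) ^ 3 / (Chi - Clo) ^ 2) := by
    have h1 : ∫ x in Set.Ioc (0:ℝ) s, f x * (x^2 - s^2)
        ≤ ∫ x in Set.Ioc (0:ℝ) s, Clo * (x^2 - s^2) := by
      refine setIntegral_mono_on (hIntF 0 s _) (hIntC 0 s _ _) measurableSet_Ioc ?_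
      intro x hx
      have hneg : x^2 - s^2 ≤ 0 := by nlinarith [hx.1.le, hx.2]
      exact mul_le_mul_of_nonpos_right (hfbound x ⟨hx.1.le, hx.2.trans hs1⟩).1 hneg
    have h2 : ∫ x in Set.Ioc s 1, f x * (x^2 - s^2)
        ≤ ∫ x in Set.Ioc s 1, Chi * (x^2 - s^2) := by
      refine setIntegral_mono_on (hIntF s 1 _) (hIntC s 1 _ _) measurableSet_Ioc ?_
      intro x hx
      have hpos : 0 ≤ x^2 - s^2 := by nlinarith [hx.1.le, hx.2]
      exact mul_le_mul_of_nonneg_right (hfbound x ⟨hs0.trans hx.1.le, hx.2⟩).2 hpos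
    have e1 : ∫ x in Set.Ioc (0:ℝ) s, Clo * (x^2 - s^2)
        = Clo * ((s^3 - 0^3)/3 - (s - 0) * s^2) := by
      rw [integral_const_mul, hIval 0 s s hs0]
    have e2 : ∫ x in Set.Ioc s 1, Chi * (x^2 - s^2)
        = Chi * ((1^3 - s^3)/3 - (1 - s) * s^2) := by
      rw [integral_const_mul, hIval s 1 s hs1]
    have halg : (1 / 3) * (Chi - (Chi - 1) ^ 3 / (Chi - Clo) ^ 2)
        = Clo * ((s^3 - 0^3)/3 - (s - 0) * s^2)
          + Chi * ((1^3 - s^3)/3 - (1 - s) * s^2) + s^2 := by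
      have h3 : (Chi - 1)^3 = ((Chi - Clo) * s)^3 := by rw [hss]
      have h4 : ((Chi - Clo) * s)^3 / (Chi - Clo)^2 = (Chi - Clo) * s^3 := by
        field_simp [hCC.ne']
      rw [h3, h4]
      linear_combination (-(s^2)) * hss
    rw [hdec s, hsplit s hs0 hs1, halg]
    linarith [h1, h2, e1, e2]
  rw [hEV]
  have hd1 : 0 ≤ (1 - Clo) ^ 3 / (Chi - Clo) ^ 2 :=
    div_nonneg (pow_nonneg (by linarith) 3) (by positivity)
  have hd2 : 0 ≤ (Chi - 1) ^ 3 / (Chi - Clo) ^ 2 :=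
    div_nonneg (pow_nonneg (by linarith) 3) (by positivity)
  exact ⟨⟨hlow, hupp⟩, ⟨by linarith, by linarith⟩⟩
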